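/- arXiv:2210.04110 — 3 statements merged into one kernel-verified Lean document; each statement's English description precedes it below -/
import Mathlib

section
/- Let $g(\delta) = 1 - \frac{(1+\epsilon_0+\delta) - \sqrt{(1+\epsilon_0+\delta)^2 - 4\epsilon_0}}{2}$ for $\delta \in (0,1]$ and $0 < \epsilon_0 < 1$. Then $\inf_{\delta \in (0,1]} g(\delta) = 1 - \epsilon_0 > 0$; in particular $\lim_{\delta \downarrow 0} g(\delta) = 1 - \epsilon_0$, which is strictly greater than $0$. -/
theorem stmt3 (ε₀ : ℝ) (h0 : 0 < ε₀) (h1 : ε₀ < 1) :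
    let g : ℝ → ℝ := fun δ =>
      1 - ((1 + ε₀ + δ) - Real.sqrt ((1 + ε₀ + δ) ^ 2 - 4 * ε₀)) / 2
    sInf (g '' Set.Ioc (0 : ℝ) 1) = 1 - ε₀ ∧
      Filter.Tendsto g (nhdsWithin 0 (Set.Ioi 0)) (nhds (1 - ε₀)) ∧
      (1 - ε₀ : ℝ) > 0 := by
  intro g
  have hpos : (1 - ε₀ : ℝ) > 0 := by linarith
  -- lower bound
  have hlb : ∀ δ ∈ Set.Ioc (0:ℝ) 1, 1 - ε₀ ≤ g δ := by
    intro δ ⟨hd0, hd1⟩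
    have hs : (1 + ε₀ + δ) - 2 * ε₀ ≤ Real.sqrt ((1 + ε₀ + δ) ^ 2 - 4 * ε₀) := by
      rw [show (1 + ε₀ + δ) - 2 * ε₀ = 1 - ε₀ + δ by ring]
      have h1' : (0:ℝ) ≤ 1 - ε₀ + δ := by linarith
      rw [Real.le_sqrt h1']
      · nlinarith
      · nlinarith [sq_nonneg (1 - ε₀ + δ)]
    simp only [g]
    linarith
  -- continuity / limit
  have hcont : Filter.Tendsto g (nhds 0) (nhds (1 - ε₀)) := by
    have hg0 : g 0 = 1 - ε₀ := by
      simp only [g, add_zero]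
      have : (1 + ε₀) ^ 2 - 4 * ε₀ = (1 - ε₀) ^ 2 := by ring
      rw [this, Real.sqrt_sq (by linarith)]
      ring
    have : Continuous g := by
      simp only [g]
      continuity
    have ht := this.tendsto 0
    rwa [hg0] at ht
  have htend : Filter.Tendsto g (nhdsWithin 0 (Set.Ioi 0)) (nhds (1 - ε₀)) :=
    hcont.mono_left nhdsWithin_le_nhds
  refine ⟨?_, htend, hpos⟩
  -- sInf
  apply IsGLB.csInf_eq
  · constructor
    · rintro x ⟨δ, hδ, rfl⟩
      exact hlb δ hδ
    · intro b hb
      refine ge_of_tendsto htend ?_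
      filter_upwards [Ioc_mem_nhdsGT_of_mem (Set.left_mem_Ico.mpr one_pos)] with δ hδ
      exact hb ⟨δ, hδ, rfl⟩
  · exact ⟨g 1, 1, Set.right_mem_Ioc.mpr one_pos, rfl⟩
end

section
/- In the 'following the majority' game with $n$ states, for each $k \in \{1,\dots,n\}$ the pair $(\pi, L)$ defined by $\pi_t(j|i) = \mathbb{1}\{j=k\}$ for all $t$, $L_0(i,j) = \mu_0(i)\mathbb{1}\{j=k\}$ and $L_t(i,j) = \mathbb{1}\{i=k, j=k\}$ for $t \ge 1$, is a Nash equilibrium (a $0$-Nash equilibrium): $\pi$ attains the value $V^f(L) = \sum_{t=1}^T r^k \cdot 1$ given flow $L$, and $L$ is consistent with all players using $\pi$. -/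
open Finset

noncomputable section

/-- State-action distribution at each time induced by a randomized Markov policy in the
"following the majority" game, where transitions are deterministic: `s_{t+1} = a_t`. -/
def majDist (n : ℕ) (μ0 : Fin n → ℝ) (π : ℕ → Fin n → Fin n → ℝ) :
    ℕ → Fin n → Fin n → ℝ
  | 0, s, a => μ0 s * π 0 s a
  | (t + 1), s, a =>
      (∑ s' : Fin n, ∑ a' : Fin n,
        majDist n μ0 π t s' a' * (if s = a' then 1 else 0)) * π (t + 1) s a

/-- Reward of the "following the majority" game: zero at time `0`, and at `t ≥ 1` a player at
state `i` taking action `j` receives `1_{i=j} (r i - r i ‖L - e_{i,i}‖₂² / 2)`. -/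
def majRew (n : ℕ) (r : Fin n → ℝ) (t : ℕ) (i j : Fin n)
    (L : Fin n → Fin n → ℝ) : ℝ :=
  if t = 0 then 0 else
    (if i = j then 1 else 0) *
      (r i - r i * (∑ p : Fin n, ∑ q : Fin n,
        (L p q - (if p = i ∧ q = i then 1 else 0)) ^ 2) / 2)

/-- Total expected reward of a representative player using policy `π` against the
population flow `L` over the horizon `{0, …, T}`. -/
def majTotal (n : ℕ) (r : Fin n → ℝ) (T : ℕ) (μ0 : Fin n → ℝ)
    (π : ℕ → Fin n → Fin n → ℝ) (L : ℕ → Fin n → Fin n → ℝ) : ℝ :=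
  ∑ t ∈ Finset.range (T + 1), ∑ s : Fin n, ∑ a : Fin n,
    majDist n μ0 π t s a * majRew n r t s a (L t)

lemma majDist_prob (n : ℕ) (μ0 : Fin n → ℝ) (hμ0 : ∀ i, 0 ≤ μ0 i)
    (hμ0sum : ∑ i, μ0 i = 1) (π' : ℕ → Fin n → Fin n → ℝ)
    (hπ' : ∀ t s, (∀ a, 0 ≤ π' t s a) ∧ ∑ a, π' t s a = 1) :
    ∀ t, (∀ s a, 0 ≤ majDist n μ0 π' t s a) ∧
      ∑ s : Fin n, ∑ a : Fin n, majDist n μ0 π' t s a = 1 := by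
  intro t
  induction t with
  | zero =>
    constructor
    · intro s a; exact mul_nonneg (hμ0 s) ((hπ' 0 s).1 a)
    · have : ∀ s : Fin n, ∑ a : Fin n, majDist n μ0 π' 0 s a = μ0 s := by
        intro s
        simp only [majDist, ← Finset.mul_sum, (hπ' 0 s).2, mul_one]
      simp only [this, hμ0sum]
  | succ t ih =>
    have hm : ∀ s : Fin n, 0 ≤ ∑ s' : Fin n, ∑ a' : Fin n,
        majDist n μ0 π' t s' a' * (if s = a' then 1 else 0) := by
      intro s
      apply Finset.sum_nonneg; intro s' _
      apply Finset.sum_nonneg; intro a' _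
      exact mul_nonneg (ih.1 s' a') (by positivity)
    constructor
    · intro s a
      exact mul_nonneg (hm s) ((hπ' (t+1) s).1 a)
    · have h1 : ∀ s : Fin n, ∑ a : Fin n, majDist n μ0 π' (t+1) s a =
          ∑ s' : Fin n, ∑ a' : Fin n,
            majDist n μ0 π' t s' a' * (if s = a' then 1 else 0) := by
        intro s
        simp only [majDist, ← Finset.mul_sum, (hπ' (t+1) s).2, mul_one]
      calc ∑ s : Fin n, ∑ a : Fin n, majDist n μ0 π' (t+1) s a
          = ∑ s : Fin n, ∑ s' : Fin n, ∑ a' : Fin n,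
              majDist n μ0 π' t s' a' * (if s = a' then 1 else 0) := by
            exact Finset.sum_congr rfl fun s _ => h1 s
        _ = ∑ s' : Fin n, ∑ a' : Fin n, majDist n μ0 π' t s' a' := by
            rw [Finset.sum_comm]
            refine Finset.sum_congr rfl fun s' _ => ?_
            rw [Finset.sum_comm]
            refine Finset.sum_congr rfl fun a' _ => ?_
            simp
        _ = 1 := ih.2

lemma sumsq (n : ℕ) (i k : Fin n) (h : i ≠ k) :
    ∑ p : Fin n, ∑ q : Fin n,
      ((if p = k ∧ q = k then (1:ℝ) else 0) - (if p = i ∧ q = i then 1 else 0)) ^ 2 = 2 := by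
  have key : ∀ p q : Fin n,
      ((if p = k ∧ q = k then (1:ℝ) else 0) - (if p = i ∧ q = i then 1 else 0)) ^ 2 =
      (if p = k ∧ q = k then (1:ℝ) else 0) + (if p = i ∧ q = i then 1 else 0) := by
    intro p q
    by_cases h1 : p = k ∧ q = k
    · by_cases h2 : p = i ∧ q = i
      · exact absurd (h2.1.symm.trans h1.1) h
      · simp [h1, h2, Ne.symm h]
    · by_cases h2 : p = i ∧ q = i <;> simp [h1, h2, h]
  simp only [key, Finset.sum_add_distrib]
  have e1 : ∀ j : Fin n, ∑ p : Fin n, ∑ q : Fin n,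
      (if p = j ∧ q = j then (1:ℝ) else 0) = 1 := by
    intro j
    simp [ite_and, Finset.sum_ite_eq]
  rw [e1 k, e1 i]; norm_num

theorem stmt13 (n T : ℕ) (hn : 0 < n) (r : Fin n → ℝ) (hr : ∀ i, 0 < r i)
    (μ0 : Fin n → ℝ) (hμ0 : ∀ i, 0 ≤ μ0 i) (hμ0sum : ∑ i, μ0 i = 1) (k : Fin n) :
    let π : ℕ → Fin n → Fin n → ℝ := fun _ _ j => if j = k then 1 else 0
    let L : ℕ → Fin n → Fin n → ℝ := fun t i j =>
      if t = 0 then μ0 i * (if j = k then 1 else 0)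
      else (if i = k ∧ j = k then 1 else 0)
    -- `π` is optimal against the flow `L` (a `0`-Nash equilibrium condition) …
    (∀ π' : ℕ → Fin n → Fin n → ℝ,
        (∀ t s, (∀ a, 0 ≤ π' t s a) ∧ ∑ a, π' t s a = 1) →
        majTotal n r T μ0 π' L ≤ majTotal n r T μ0 π L) ∧
      -- … attaining the value `V^f(L) = ∑_{t=1}^T r^k`
      majTotal n r T μ0 π L = (T : ℝ) * r k ∧
      -- and `L` is consistent with all players using `π`
      (∀ t, t ≤ T → ∀ s a, majDist n μ0 π t s a = L t s a) := by
  intro π L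
  -- consistency
  have hcons : ∀ t, ∀ s a : Fin n, majDist n μ0 π t s a = L t s a := by
    intro t
    induction t with
    | zero => intro s a; simp [majDist, π, L]
    | succ t ih =>
      intro s a
      have hm : (∑ s' : Fin n, ∑ a' : Fin n,
          majDist n μ0 π t s' a' * (if s = a' then 1 else 0)) =
          (if s = k then (1:ℝ) else 0) := by
        have : ∀ s' a' : Fin n, majDist n μ0 π t s' a' = L t s' a' := ih
        simp only [this]
        cases t with
        | zero =>
          simp only [L, if_pos rfl]
          by_cases hs : s = k
          · subst hs
            simp [mul_ite, ite_mul, Finset.sum_ite_eq, hμ0sum]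
          · simp [mul_ite, ite_mul, Finset.sum_ite_eq, hs]
        | succ t =>
          simp only [L, Nat.succ_ne_zero, if_neg (Nat.succ_ne_zero t)]
          by_cases hs : s = k
          · subst hs
            simp [ite_and, mul_ite, ite_mul, Finset.sum_ite_eq]
          · simp [ite_and, mul_ite, ite_mul, Finset.sum_ite_eq, hs]
      show (∑ s' : Fin n, ∑ a' : Fin n,
          majDist n μ0 π t s' a' * (if s = a' then 1 else 0)) * π (t+1) s a = L (t+1) s a
      rw [hm]
      simp only [L, π, Nat.succ_ne_zero, if_neg (Nat.succ_ne_zero t)]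
      by_cases hs : s = k <;> by_cases ha : a = k <;> simp [hs, ha]
  -- reward simplification
  have hrew : ∀ t : ℕ, t ≠ 0 → ∀ s a : Fin n,
      majRew n r t s a (L t) = if s = k ∧ s = a then r k else 0 := by
    intro t ht s a
    simp only [majRew, if_neg ht]
    have hL : L t = fun i j => if i = k ∧ j = k then (1:ℝ) else 0 := by
      funext i j; simp [L, ht]
    rw [hL]
    by_cases hs : s = k
    · simp only [hs]
      have hz : (∑ p : Fin n, ∑ q : Fin n,
          ((if p = k ∧ q = k then (1:ℝ) else 0) - (if p = k ∧ q = k then 1 else 0)) ^ 2) = 0 := by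
        simp
      rw [hz]
      by_cases ha : k = a <;> simp [ha]
    · rw [sumsq n s k hs]
      have h2 : (r s - r s * 2 / 2) = 0 := by ring
      rw [h2, mul_zero]
      by_cases ha : s = a
      · subst ha; simp [hs]
      · simp [ha]
  -- value of π against L
  have h0 : ∀ π'' : ℕ → Fin n → Fin n → ℝ,
      ∑ s : Fin n, ∑ a : Fin n, majDist n μ0 π'' 0 s a * majRew n r 0 s a (L 0) = 0 := by
    intro π''; simp [majRew]
  have hval : majTotal n r T μ0 π L = (T : ℝ) * r k := by
    have hterm : ∀ t : ℕ, t ≠ 0 →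
        ∑ s : Fin n, ∑ a : Fin n, majDist n μ0 π t s a * majRew n r t s a (L t) = r k := by
      intro t ht
      have e : ∀ s a : Fin n, majDist n μ0 π t s a * majRew n r t s a (L t) =
          if s = k ∧ a = k then r k else 0 := by
        intro s a
        rw [hcons, hrew t ht]
        simp only [L, if_neg ht]
        by_cases h1 : s = k
        · by_cases h2 : a = k
          · subst h1; subst h2; simp
          · simp [h2]
        · simp [h1]
      simp only [e]
      simp [ite_and, Finset.sum_ite_eq]
    unfold majTotal
    rw [Finset.sum_range_succ', h0 π, add_zero]
    rw [Finset.sum_congr rfl (fun i (_ : i ∈ Finset.range T) =>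
      hterm (i+1) (Nat.succ_ne_zero i))]
    simp [mul_comm]
  -- optimality
  have key : ∀ π' : ℕ → Fin n → Fin n → ℝ,
      (∀ t s, (∀ a, 0 ≤ π' t s a) ∧ ∑ a, π' t s a = 1) →
      majTotal n r T μ0 π' L ≤ (T : ℝ) * r k := by
    intro π' hπ'
    have hp := majDist_prob n μ0 hμ0 hμ0sum π' hπ'
    have hbound : ∀ t : ℕ, t ≠ 0 →
        ∑ s : Fin n, ∑ a : Fin n,
          majDist n μ0 π' t s a * majRew n r t s a (L t) ≤ r k := by
      intro t ht
      calc ∑ s : Fin n, ∑ a : Fin n, majDist n μ0 π' t s a * majRew n r t s a (L t)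
          ≤ ∑ s : Fin n, ∑ a : Fin n, majDist n μ0 π' t s a * r k := by
            refine Finset.sum_le_sum fun s _ => Finset.sum_le_sum fun a _ => ?_
            refine mul_le_mul_of_nonneg_left ?_ ((hp t).1 s a)
            rw [hrew t ht s a]
            split
            · exact le_refl _
            · exact (hr k).le
        _ = r k := by
            simp only [← Finset.sum_mul]
            rw [(hp t).2, one_mul]
    unfold majTotal
    rw [Finset.sum_range_succ', h0 π', add_zero]
    calc ∑ i ∈ Finset.range T, ∑ s : Fin n, ∑ a : Fin n,
          majDist n μ0 π' (i+1) s a * majRew n r (i+1) s a (L (i+1))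
        ≤ ∑ _i ∈ Finset.range T, r k :=
          Finset.sum_le_sum fun i _ => hbound (i+1) (Nat.succ_ne_zero i)
      _ = (T : ℝ) * r k := by simp [mul_comm]
  exact ⟨fun π' hπ' => hval ▸ key π' hπ', hval, fun t _ s a => hcons t s a⟩

end
end

section
/- (Policy reconstruction) Let $d_t(s,a) \ge 0$ satisfy the flow constraints of a finite-horizon MDP with transitions $P_t$, initial distribution $\mu_0$, and define $\mu_t(s) = \sum_a d_t(s,a)$ and $\pi_t(a|s) = d_t(s,a)/\mu_t(s)$ when $\mu_t(s) > 0$ (arbitrary probability vector otherwise). Then the state-action distribution of the Markov chain started at $\mu_0$, using policy $\pi$, with transitions $P_t$, equals $d_t$: $\mathbb{P}^\pi(s_t = s, a_t = a) = d_t(s,a)$ for all $t, s, a$. -/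
noncomputable section

/-- State-action distribution of the time-inhomogeneous Markov chain started at `μ0`,
using randomized Markov policy `π`, with transition kernels `P`. -/
def mdpDist (S A : ℕ) (μ0 : Fin S → ℝ) (P : ℕ → Fin S → Fin A → Fin S → ℝ)
    (π : ℕ → Fin S → Fin A → ℝ) : ℕ → Fin S → Fin A → ℝ
  | 0, s, a => μ0 s * π 0 s a
  | (t + 1), s, a =>
      (∑ s' : Fin S, ∑ a' : Fin A, mdpDist S A μ0 P π t s' a' * P t s' a' s) *
        π (t + 1) s a

theorem stmt16 (S A : ℕ) (d : ℕ → Fin S → Fin A → ℝ) (μ0 : Fin S → ℝ)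
    (P : ℕ → Fin S → Fin A → Fin S → ℝ) (π : ℕ → Fin S → Fin A → ℝ)
    (hd : ∀ t s a, 0 ≤ d t s a)
    (hinit : ∀ s, ∑ a, d 0 s a = μ0 s)
    (hflow : ∀ t s', ∑ a', d (t + 1) s' a' = ∑ s, ∑ a, d t s a * P t s a s')
    (hπprob : ∀ t s, (∀ a, 0 ≤ π t s a) ∧ ∑ a, π t s a = 1)
    (hπdef : ∀ t s a, 0 < (∑ a', d t s a') →
      π t s a = d t s a / ∑ a', d t s a') :
    ∀ t s a, mdpDist S A μ0 P π t s a = d t s a := by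
  have key : ∀ t s a, (∑ a', d t s a') * π t s a = d t s a := by
    intro t s a
    rcases lt_or_eq_of_le (Finset.sum_nonneg fun a' _ => hd t s a') with h | h
    · rw [hπdef t s a h, mul_div_cancel₀ _ (ne_of_gt h)]
    · have hz : d t s a = 0 := by
        have := (Finset.sum_eq_zero_iff_of_nonneg (fun a' _ => hd t s a')).mp h.symm
        exact this a (Finset.mem_univ a)
      rw [← h, hz, zero_mul]
  intro t
  induction t with
  | zero => intro s a; rw [mdpDist, ← hinit s, key]
  | succ t ih =>
    intro s a
    rw [mdpDist]
    have : (∑ s' : Fin S, ∑ a' : Fin A, mdpDist S A μ0 P π t s' a' * P t s' a' s)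
        = ∑ a', d (t + 1) s a' := by
      rw [hflow t s]
      exact Finset.sum_congr rfl fun s' _ => Finset.sum_congr rfl fun a' _ => by rw [ih s' a']
    rw [this, key]

end
end
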